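/- Let B be a group, φ ∈ Aut(B), G = B ⋊ Z, and suppose Z acts freely by conjugation on conjugacy classes of nontrivial elements of B. Then for every virtually cyclic subgroup H of G not contained in B, the commensurator Comm_G(H) = {g ∈ G : |H : H ∩ gHg⁻¹| < ∞ and |gHg⁻¹ : H ∩ gHg⁻¹| < ∞} is infinite cyclic. -/

import Mathlib

/-- The semidirect product `B ⋊ ℤ` where `ℤ` acts via the automorphism `φ`. -/
abbrev SDP (B : Type*) [Group B] (φ : MulAut B) :=
  SemidirectProduct B (Multiplicative ℤ) (zpowersHom (MulAut B) φ)

/-- The canonical embedding of `B` into `B ⋊ ℤ`. -/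
def inlB (B : Type*) [Group B] (φ : MulAut B) : B →* SDP B φ :=
  SemidirectProduct.inl

open SemidirectProduct Pointwise

section Aux

variable {B : Type*} [Group B] {φ : MulAut B}

/-- A group that injects into a cyclic group is cyclic. -/
lemma isCyclic_of_injective' {G₁ G₂ : Type*} [Group G₁] [Group G₂] [IsCyclic G₂]
    (f : G₁ →* G₂) (hf : Function.Injective f) : IsCyclic G₁ := by
  let e := MonoidHom.ofInjective hf
  exact isCyclic_of_surjective (e.symm : f.range ≃* G₁) e.symm.surjective

/-- zpow injectivity in `Multiplicative ℤ` for a non-identity base. -/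
lemma mzint_zpow_inj {a : Multiplicative ℤ} (ha : a ≠ 1) {s t : ℤ}
    (h : a ^ s = a ^ t) : s = t := by
  have hm : a.toAdd ≠ 0 := by simpa using ha
  have := congrArg Multiplicative.toAdd h
  rw [toAdd_zpow, toAdd_zpow, smul_eq_mul, smul_eq_mul] at this
  exact mul_right_cancel₀ hm this

lemma mzint_zpow_ne_one {a : Multiplicative ℤ} (ha : a ≠ 1) {s : ℤ} (hs : s ≠ 0) :
    a ^ s ≠ 1 := by
  intro h
  exact hs (mzint_zpow_inj ha (h.trans (zpow_zero a).symm))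

/-- The key consequence of freeness: if `u` lies in `B`, `w` has nontrivial
`ℤ`-component, and `w` commutes with `u` (conjugation fixes `u`), then `u = 1`. -/
lemma conj_helper {G : Type*} [Group G] (a c b : G) (h : a * b * a⁻¹ = c * b * c⁻¹) :
    (c⁻¹ * a) * b * (c⁻¹ * a)⁻¹ = b := by
  calc (c⁻¹ * a) * b * (c⁻¹ * a)⁻¹ = c⁻¹ * (a * b * a⁻¹) * c := by group
  _ = c⁻¹ * (c * b * c⁻¹) * c := by rw [h]
  _ = b := by group

lemma conj_eq_one (hfree : ∀ y : B, y ≠ 1 → ∀ r : ℤ, r ≠ 0 → ¬ IsConj ((φ ^ r) y) y)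
    {u w : SDP B φ} (hu : u.right = 1) (hw : w.right ≠ 1)
    (h : w * u * w⁻¹ = u) : u = 1 := by
  by_contra hne
  have hul : u.left ≠ 1 := by
    intro h1
    exact hne (SemidirectProduct.ext h1 hu)
  set r : ℤ := (w.right).toAdd with hr_def
  have hr : r ≠ 0 := by simpa [hr_def] using hw
  apply hfree u.left hul r hr
  have hleft : (w * u * w⁻¹).left = w.left * (φ ^ r) u.left * w.left⁻¹ := by
    rw [mul_left, mul_left, inv_left, mul_right, hu, mul_one]
    rw [map_inv]
    simp [zpowersHom_apply, hr_def, mul_assoc]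
  rw [h] at hleft
  rw [isConj_iff]
  exact ⟨w.left, hleft.symm⟩

end Aux

/-- If `ℤ` acts freely by conjugation on conjugacy classes of nontrivial
elements of `B`, then for every virtually cyclic subgroup `H` of `G = B ⋊ ℤ`
not contained in `B`, the commensurator of `H` in `G` is infinite cyclic. -/
theorem stmt11 (B : Type*) [Group B] (φ : MulAut B)
    (hfree : ∀ y : B, y ≠ 1 → ∀ r : ℤ, r ≠ 0 → ¬ IsConj ((φ ^ r) y) y)
    (H : Subgroup (SDP B φ))
    (hvc : ∃ K : Subgroup (SDP B φ), K ≤ H ∧ IsCyclic K ∧ K.relIndex H ≠ 0)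
    (hnB : ¬ H ≤ (inlB B φ).range) :
    Infinite (Subgroup.Commensurable.commensurator H) ∧
      IsCyclic (Subgroup.Commensurable.commensurator H) := by
  classical
  obtain ⟨K, hKH, hKc, hKi⟩ := hvc
  set π : SDP B φ →* Multiplicative ℤ := rightHom with hπ
  -- `H` contains an element with nontrivial `ℤ`-component.
  have hh : ∃ h ∈ H, π h ≠ 1 := by
    by_contra hcon
    push_neg at hcon
    apply hnB
    intro x hx
    have : x ∈ (rightHom : SDP B φ →* Multiplicative ℤ).ker := hcon x hx
    rw [← range_inl_eq_ker_rightHom] at this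
    exact this
  obtain ⟨h, hH, hhr⟩ := hh
  -- a generator of `K`
  obtain ⟨⟨k₀, hk₀K⟩, hk₀gen⟩ := hKc
  -- `π k₀ ≠ 1`
  have hk₀r : π k₀ ≠ 1 := by
    obtain ⟨n, hn0, -, hnK⟩ := Subgroup.exists_pow_mem_of_relIndex_ne_zero hKi hH
    obtain ⟨s, hs⟩ := hk₀gen ⟨h ^ n, hnK.1⟩
    have hs' : k₀ ^ s = h ^ n := congrArg Subtype.val hs
    intro h1
    have h2 : π (h ^ n) = 1 := by
      rw [← hs', map_zpow, h1, one_zpow]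
    have h3 : π h ^ (n : ℤ) = 1 := by
      rw [zpow_natCast, ← map_pow, h2]
    exact mzint_zpow_ne_one hhr (Int.natCast_ne_zero.mpr hn0.ne') h3
  -- elements of `K` with trivial `ℤ`-component are trivial
  have hKker : ∀ x ∈ K, π x = 1 → x = 1 := by
    intro x hxK hx1
    obtain ⟨s, hs⟩ := hk₀gen ⟨x, hxK⟩
    have hs' : k₀ ^ s = x := congrArg Subtype.val hs
    have : π k₀ ^ s = 1 := by rw [← map_zpow, hs', hx1]
    have hs0 : s = 0 := by
      by_contra h0
      exact mzint_zpow_ne_one hk₀r h0 this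
    rw [← hs', hs0, zpow_zero]
  -- the set of elements of `H` in the kernel of `π` is finite
  have hSfin : Finite {x : SDP B φ // x ∈ H ∧ π x = 1} := by
    haveI : (K.subgroupOf H).FiniteIndex := ⟨hKi⟩
    have hinj : Function.Injective
        (fun x : {x : SDP B φ // x ∈ H ∧ π x = 1} =>
          (QuotientGroup.mk ⟨x.1, x.2.1⟩ : H ⧸ K.subgroupOf H)) := by
      intro x y hxy
      have := (QuotientGroup.eq (s := K.subgroupOf H)).1 hxy
      rw [Subgroup.mem_subgroupOf] at this
      have h1 : (x.1⁻¹ * y.1 : SDP B φ) ∈ K := this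
      have h2 : π (x.1⁻¹ * y.1) = 1 := by
        rw [map_mul, map_inv, x.2.2, y.2.2, inv_one, one_mul]
      exact Subtype.ext (inv_mul_eq_one.1 (hKker _ h1 h2))
    exact Finite.of_injective _ hinj
  -- no nontrivial element of `H` lies in the kernel of `π`
  have hHker : ∀ x ∈ H, π x = 1 → x = 1 := by
    intro b hbH hb1
    by_contra hbne
    set c : ℤ → {x : SDP B φ // x ∈ H ∧ π x = 1} := fun n =>
      ⟨k₀ ^ n * b * (k₀ ^ n)⁻¹,
        ⟨mul_mem (mul_mem (zpow_mem (hKH hk₀K) n) hbH) (inv_mem (zpow_mem (hKH hk₀K) n)),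
         by rw [map_mul, map_mul, map_inv, hb1, mul_one, mul_inv_cancel]⟩⟩ with hc
    obtain ⟨n1, n2, hne, heq⟩ := Finite.exists_ne_map_eq_of_infinite c
    have heq' : k₀ ^ n1 * b * (k₀ ^ n1)⁻¹ = k₀ ^ n2 * b * (k₀ ^ n2)⁻¹ :=
      congrArg Subtype.val heq
    have hw : (k₀ ^ (n1 - n2)) * b * (k₀ ^ (n1 - n2))⁻¹ = b := by
      have hk : k₀ ^ (n1 - n2) = (k₀ ^ n2)⁻¹ * k₀ ^ n1 := by
        rw [← zpow_neg, ← zpow_add, neg_add_eq_sub]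
      rw [hk]
      exact conj_helper _ _ _ heq'
    have hwr : (k₀ ^ (n1 - n2)).right ≠ 1 := by
      have : π (k₀ ^ (n1 - n2)) = π k₀ ^ (n1 - n2) := map_zpow _ _ _
      rw [hπ, rightHom_eq_right] at this
      rw [this]
      exact mzint_zpow_ne_one hk₀r (sub_ne_zero.2 hne)
    have hbr : b.right = 1 := by rwa [hπ, rightHom_eq_right] at hb1
    exact hbne (conj_eq_one hfree hbr hwr hw)
  -- `H` is cyclic
  have hHcyc : IsCyclic H := by
    apply isCyclic_of_injective' (π.comp H.subtype)
    rw [← MonoidHom.ker_eq_bot_iff, Subgroup.eq_bot_iff_forall]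
    intro x hx
    have : π (x : SDP B φ) = 1 := hx
    exact Subtype.ext (hHker x x.2 this)
  obtain ⟨h₀, h₀gen⟩ := hHcyc
  have hmem : ∀ x : H, ∃ s : ℤ, (h₀ : SDP B φ) ^ s = x := by
    intro x
    obtain ⟨s, hs⟩ := h₀gen x
    exact ⟨s, congrArg Subtype.val hs⟩
  -- `π h₀ ≠ 1`
  have hh₀r : π (h₀ : SDP B φ) ≠ 1 := by
    obtain ⟨s, hs⟩ := hmem ⟨h, hH⟩
    have hs2 : (h₀ : SDP B φ) ^ s = h := hs
    intro h1
    apply hhr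
    rw [← hs2, map_zpow, h1, one_zpow]
  -- no nontrivial element of the commensurator lies in the kernel of `π`
  have hCker : ∀ g ∈ Subgroup.Commensurable.commensurator H, π g = 1 → g = 1 := by
    intro g hgC hg1
    have hcomm : Subgroup.Commensurable (ConjAct.toConjAct g • H) H :=
      (Subgroup.Commensurable.commensurator_mem_iff H g).1 hgC
    obtain ⟨n, hn0, -, hnmem⟩ :=
      Subgroup.exists_pow_mem_of_relIndex_ne_zero hcomm.1 h₀.2
    set x : SDP B φ := (h₀ : SDP B φ) ^ n with hx_def
    have hxH : x ∈ H := pow_mem h₀.2 n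
    have hxg : x ∈ ConjAct.toConjAct g • H := hnmem.1
    have hy : g⁻¹ * x * g ∈ H := by
      rw [Subgroup.mem_pointwise_smul_iff_inv_smul_mem] at hxg
      have : (ConjAct.toConjAct g)⁻¹ • x = g⁻¹ * x * g := by
        rw [← ConjAct.toConjAct_inv, ConjAct.toConjAct_smul]
        group
      rwa [this] at hxg
    obtain ⟨q, hq⟩ := hmem ⟨g⁻¹ * x * g, hy⟩
    have hq' : (h₀ : SDP B φ) ^ q = g⁻¹ * x * g := hq
    -- compare ℤ-components
    have hπx : π (g⁻¹ * x * g) = π x := by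
      rw [map_mul, map_mul, map_inv, hg1, inv_one, one_mul, mul_one]
    have hqn : q = (n : ℤ) := by
      apply mzint_zpow_inj hh₀r
      rw [← map_zpow, hq', hπx, hx_def, ← zpow_natCast, ← map_zpow]
    have hxfix : x * g * x⁻¹ = g := by
      have : g⁻¹ * x * g = x := by
        rw [← hq', hqn, hx_def, zpow_natCast]
      have h2 : x * g = g * x := by
        calc x * g = g * (g⁻¹ * x * g) := by group
        _ = g * x := by rw [this]
      rw [h2]; group
    have hgr : g.right = 1 := by rwa [hπ, rightHom_eq_right] at hg1
    have hxr : x.right ≠ 1 := by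
      have : π x = π (h₀ : SDP B φ) ^ (n : ℤ) := by
        rw [hx_def, ← zpow_natCast, map_zpow]
      rw [hπ, rightHom_eq_right] at this
      rw [this]
      exact mzint_zpow_ne_one hh₀r (by exact_mod_cast hn0.ne')
    exact conj_eq_one hfree hgr hxr hxfix
  -- `H ≤ commensurator H`
  have hHC : H ≤ Subgroup.Commensurable.commensurator H := by
    intro a haH
    rw [Subgroup.Commensurable.commensurator_mem_iff]
    have : ConjAct.toConjAct a • H = H := by
      ext z
      rw [Subgroup.mem_pointwise_smul_iff_inv_smul_mem, ← ConjAct.toConjAct_inv,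
        ConjAct.toConjAct_smul, inv_inv]
      constructor
      · intro hz
        have := mul_mem (mul_mem haH hz) (inv_mem haH)
        have h2 : a * (a⁻¹ * z * a) * a⁻¹ = z := by group
        rwa [h2] at this
      · intro hz
        exact mul_mem (mul_mem (inv_mem haH) hz) haH
    rw [this]
  constructor
  · -- infinite
    apply Infinite.of_injective
      (fun s : ℤ => (⟨(h₀ : SDP B φ) ^ s, hHC (zpow_mem h₀.2 s)⟩ :
        Subgroup.Commensurable.commensurator H))
    intro s t hst
    have : (h₀ : SDP B φ) ^ s = (h₀ : SDP B φ) ^ t := congrArg Subtype.val hst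
    have := congrArg π this
    rw [map_zpow, map_zpow] at this
    exact mzint_zpow_inj hh₀r this
  · -- cyclic
    apply isCyclic_of_injective' (π.comp (Subgroup.Commensurable.commensurator H).subtype)
    rw [← MonoidHom.ker_eq_bot_iff, Subgroup.eq_bot_iff_forall]
    intro x hx
    exact Subtype.ext (hCker x x.2 hx)
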